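/- arXiv:2310.08813 — 4 statements merged into one kernel-verified Lean document; each statement's English description precedes it below -/
import Mathlib

section
/- (Mandelstam–Tamm bound, deduced from the optimized Lee–Chau bound.) Let n ∈ ℕ, let a : Fin n → ℂ satisfy ∑_j ‖a_j‖² = 1, let E : Fin n → ℝ, let τ ≥ 0, and set √ε = ‖∑_j ‖a_j‖²·exp(−i·E_j·τ)‖. Then for every E_r ∈ ℝ: τ² · ∑_j ‖a_j‖²·(E_j − E_r)² ≥ (arccos √ε)². In particular, taking E_r = ∑_j ‖a_j‖²·E_j gives τ·ΔE ≥ arccos(√ε), where ΔE is the energy standard deviation of the state. -/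
open Real

lemma sinA {a b : ℝ} (ha : 0 ≤ a) (hab : a ≤ b) (hb : b ≤ π) :
    a * Real.sin b ≤ b * Real.sin a := by
  rcases eq_or_lt_of_le (ha.trans hab) with h | hbpos
  · have hb0 : b = 0 := h.symm
    have ha0 : a = 0 := le_antisymm (hb0 ▸ hab) ha
    simp [ha0, hb0]
  · have hcon := strictConcaveOn_sin_Icc.concaveOn.2 (Set.mem_Icc.2 ⟨le_rfl, pi_pos.le⟩)
      (Set.mem_Icc.2 ⟨hbpos.le, hb⟩)
      (sub_nonneg.2 (div_le_one_of_le₀ hab hbpos.le)) (div_nonneg ha hbpos.le)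
      (sub_add_cancel 1 (a/b))
    simp only [smul_eq_mul, mul_zero, Real.sin_zero, zero_add] at hcon
    rw [div_mul_cancel₀ _ hbpos.ne'] at hcon
    calc a * Real.sin b = b * (a / b * Real.sin b) := by field_simp
    _ ≤ b * Real.sin a := by nlinarith [hcon, hbpos]

lemma tangent {s : ℝ} (hs0 : 0 < s) (hsπ : s ≤ π) {x : ℝ} (hx0 : 0 ≤ x) (hxπ : x ≤ π) :
    Real.cos s + Real.sin s / (2*s) * (s^2 - x^2) ≤ Real.cos x := by
  set c : ℝ := Real.sin s / (2*s) with hc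
  set g : ℝ → ℝ := fun y => Real.cos y - Real.cos s - c * (s^2 - y^2) with hg
  have hderiv : ∀ y : ℝ, HasDerivAt g (Real.sin s / s * y - Real.sin y) y := by
    intro y
    have h1 : HasDerivAt (fun y : ℝ => Real.cos y) (-Real.sin y) y := Real.hasDerivAt_cos y
    have h2 : HasDerivAt (fun y : ℝ => Real.cos s + c * (s^2 - y^2)) (-(c * (2*y))) y := by
      have : HasDerivAt (fun y : ℝ => s^2 - y^2) (-(2*y)) y := by
        simpa using ((hasDerivAt_pow 2 y).const_sub (s^2))
      simpa [mul_comm] using (this.const_mul c).const_add (Real.cos s)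
    have := h1.sub h2
    rw [show g = (fun y : ℝ => Real.cos y) - fun y : ℝ => Real.cos s + c * (s^2 - y^2) by
      ext z; simp only [hg, Pi.sub_apply]; ring]
    exact this.congr_deriv (by rw [hc]; field_simp; ring)
  have hdiff : Differentiable ℝ g := fun y => (hderiv y).differentiableAt
  have hderiv' : ∀ y, deriv g y = Real.sin s / s * y - Real.sin y := fun y => (hderiv y).deriv
  have hgs : g s = 0 := by simp [hg]
  have key : g x ≥ 0 := by
    rcases le_total x s with hxs | hsx
    · have hanti : AntitoneOn g (Set.Icc 0 s) := by
        apply antitoneOn_of_deriv_nonpos (convex_Icc 0 s) hdiff.continuous.continuousOn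
          (hdiff.differentiableOn)
        intro y hy
        rw [interior_Icc] at hy
        rw [hderiv']
        have := sinA hy.1.le hy.2.le hsπ
        rw [sub_nonpos, div_mul_eq_mul_div, div_le_iff₀ hs0]
        nlinarith
      have := hanti (Set.mem_Icc.2 ⟨hx0, hxs⟩) (Set.mem_Icc.2 ⟨hs0.le, le_rfl⟩) hxs
      linarith [hgs ▸ this]
    · have hmono : MonotoneOn g (Set.Icc s π) := by
        apply monotoneOn_of_deriv_nonneg (convex_Icc s π) hdiff.continuous.continuousOn
          (hdiff.differentiableOn)
        intro y hy
        rw [interior_Icc] at hy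
        rw [hderiv']
        have := sinA hs0.le hy.1.le hy.2.le
        rw [sub_nonneg, div_mul_eq_mul_div, le_div_iff₀ hs0]
        nlinarith
      have := hmono (Set.mem_Icc.2 ⟨le_rfl, hsπ⟩) (Set.mem_Icc.2 ⟨hsx, hxπ⟩) hsx
      linarith [hgs ▸ this]
  simp only [hg] at key
  linarith

lemma pointwise {s : ℝ} (hs0 : 0 < s) (hsπ : s ≤ π) (θ : ℝ) :
    Real.cos s + Real.sin s / (2*s) * (s^2 - θ^2) ≤ Real.cos θ := by
  set φ : ℝ := min |θ| π with hφ
  have hφ0 : 0 ≤ φ := le_min (abs_nonneg θ) pi_pos.le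
  have hφπ : φ ≤ π := min_le_right _ _
  have h1 := tangent hs0 hsπ hφ0 hφπ
  have hφθ : φ^2 ≤ θ^2 := by
    have := min_le_left |θ| π
    nlinarith [abs_nonneg θ, sq_abs θ]
  have hc : 0 ≤ Real.sin s / (2*s) :=
    div_nonneg (Real.sin_nonneg_of_nonneg_of_le_pi hs0.le hsπ) (by linarith)
  have h2 : Real.cos φ ≤ Real.cos θ := by
    rcases le_total |θ| π with h | h
    · rw [hφ, min_eq_left h, Real.cos_abs]
    · rw [hφ, min_eq_right h]
      simpa using Real.neg_one_le_cos θ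
  nlinarith [mul_le_mul_of_nonneg_left hφθ hc]

lemma core {n : ℕ} (p : Fin n → ℝ) (hp : ∀ j, 0 ≤ p j) (hp1 : ∑ j, p j = 1)
    (θ : Fin n → ℝ) :
    Real.arccos ‖∑ j, (p j : ℂ) * Complex.exp ((-θ j : ℝ) * Complex.I)‖ ^ 2
      ≤ ∑ j, p j * θ j ^ 2 := by
  set F : ℝ := ‖∑ j, (p j : ℂ) * Complex.exp ((-θ j : ℝ) * Complex.I)‖ with hF
  set V : ℝ := ∑ j, p j * θ j ^ 2 with hVdef
  have hV0 : 0 ≤ V := Finset.sum_nonneg fun j _ => mul_nonneg (hp j) (sq_nonneg _)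
  have hRe : ∑ j, p j * Real.cos (θ j) ≤ F := by
    have h1 : (∑ j, (p j : ℂ) * Complex.exp ((-θ j : ℝ) * Complex.I)).re
        = ∑ j, p j * Real.cos (θ j) := by
      rw [Complex.re_sum]
      refine Finset.sum_congr rfl fun j _ => ?_
      rw [Complex.re_ofReal_mul, Complex.exp_ofReal_mul_I_re, Real.cos_neg]
    calc ∑ j, p j * Real.cos (θ j)
        = (∑ j, (p j : ℂ) * Complex.exp ((-θ j : ℝ) * Complex.I)).re := h1.symm
      _ ≤ F := Complex.re_le_norm _
  have harc0 : 0 ≤ Real.arccos F := Real.arccos_nonneg F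
  by_cases hV : V < π ^ 2
  · rcases hV0.eq_or_lt with h0 | hVpos
    · -- V = 0
      have hzero : ∀ j ∈ Finset.univ, p j * θ j ^ 2 = 0 :=
        (Finset.sum_eq_zero_iff_of_nonneg
          (fun j _ => mul_nonneg (hp j) (sq_nonneg _))).1 h0.symm
      have hsum1 : ∑ j, p j * Real.cos (θ j) = 1 := by
        rw [← hp1]
        refine Finset.sum_congr rfl fun j _ => ?_
        rcases mul_eq_zero.1 (hzero j (Finset.mem_univ j)) with h | h
        · simp [h]
        · have : θ j = 0 := by nlinarith [sq_nonneg (θ j)]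
          rw [this, Real.cos_zero, mul_one]
      have hF1 : (1:ℝ) ≤ F := hsum1 ▸ hRe
      rw [Real.arccos_eq_zero.2 hF1]
      simpa using hV0
    · -- 0 < V
      set s : ℝ := Real.sqrt V with hsdef
      have hs2 : s ^ 2 = V := Real.sq_sqrt hV0
      have hs0 : 0 < s := Real.sqrt_pos.2 hVpos
      have hsπ : s ≤ π := by nlinarith [pi_pos]
      set c : ℝ := Real.sin s / (2*s) with hc
      have hsum : Real.cos s ≤ ∑ j, p j * Real.cos (θ j) := by
        have hpt : ∀ j ∈ Finset.univ,
            p j * (Real.cos s + c * (s^2 - θ j ^2)) ≤ p j * Real.cos (θ j) :=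
          fun j _ => mul_le_mul_of_nonneg_left (pointwise hs0 hsπ (θ j)) (hp j)
        have heq : ∑ j, p j * (Real.cos s + c * (s^2 - θ j ^2)) = Real.cos s := by
          have hr : ∀ j, p j * (Real.cos s + c * (s^2 - θ j ^2))
              = (Real.cos s + c * s^2) * p j - c * (p j * θ j ^2) := fun j => by ring
          rw [Finset.sum_congr rfl fun j _ => hr j, Finset.sum_sub_distrib,
            ← Finset.mul_sum, ← Finset.mul_sum, hp1, ← hVdef]
          rw [← hs2]; ring
        calc Real.cos s = ∑ j, p j * (Real.cos s + c * (s^2 - θ j ^2)) := heq.symm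
          _ ≤ ∑ j, p j * Real.cos (θ j) := Finset.sum_le_sum hpt
      have hcsF : Real.cos s ≤ F := hsum.trans hRe
      have harc : Real.arccos F ≤ s := by
        have h1 : Real.arccos F ≤ Real.arccos (Real.cos s) := by
          simp only [Real.arccos]
          have := Real.monotone_arcsin hcsF
          linarith
        rwa [Real.arccos_cos hs0.le hsπ] at h1
      nlinarith
  · have h1 : Real.arccos F ≤ π := Real.arccos_le_pi F
    nlinarith [pi_pos]

theorem stmt15 (n : ℕ) (a : Fin n → ℂ) (ha : ∑ j, ‖a j‖ ^ 2 = 1)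
    (E : Fin n → ℝ) (τ : ℝ) (hτ : 0 ≤ τ) :
    (∀ Er : ℝ,
      (Real.arccos
        ‖∑ j, ((‖a j‖ ^ 2 : ℝ) : ℂ) * Complex.exp (-Complex.I * (E j : ℂ) * (τ : ℂ))‖) ^ 2 ≤
      τ ^ 2 * ∑ j, ‖a j‖ ^ 2 * (E j - Er) ^ 2) ∧
    Real.arccos
        ‖∑ j, ((‖a j‖ ^ 2 : ℝ) : ℂ) * Complex.exp (-Complex.I * (E j : ℂ) * (τ : ℂ))‖ ≤
      τ * Real.sqrt (∑ j, ‖a j‖ ^ 2 * E j ^ 2 - (∑ j, ‖a j‖ ^ 2 * E j) ^ 2) := by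
  set p : Fin n → ℝ := fun j => ‖a j‖ ^ 2 with hpdef
  have hp : ∀ j, 0 ≤ p j := fun j => sq_nonneg _
  set F : ℝ := ‖∑ j, ((‖a j‖ ^ 2 : ℝ) : ℂ) * Complex.exp (-Complex.I * (E j : ℂ) * (τ : ℂ))‖
    with hFdef
  have key : ∀ Er : ℝ,
      Real.arccos F ^ 2 ≤ τ ^ 2 * ∑ j, ‖a j‖ ^ 2 * (E j - Er) ^ 2 := by
    intro Er
    set θ : Fin n → ℝ := fun j => (E j - Er) * τ with hθdef
    have habs : ‖Complex.exp (((Er * τ : ℝ) : ℂ) * Complex.I)‖ = 1 := by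
      simpa using Complex.norm_exp_ofReal_mul_I (Er * τ)
    have hradius : F = ‖∑ j, (p j : ℂ) * Complex.exp ((-θ j : ℝ) * Complex.I)‖ := by
      rw [hFdef, ← one_mul ‖∑ j, ((‖a j‖ ^ 2 : ℝ) : ℂ) *
        Complex.exp (-Complex.I * (E j : ℂ) * (τ : ℂ))‖, ← habs, ← norm_mul, Finset.mul_sum]
      congr 1
      refine Finset.sum_congr rfl fun j _ => ?_
      rw [mul_comm (Complex.exp (((Er * τ : ℝ) : ℂ) * Complex.I)), mul_assoc,
        ← Complex.exp_add]
      congr 2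
      push_cast [hθdef]
      ring
    have h1 := core p hp (by simpa [hpdef] using ha) θ
    rw [← hradius] at h1
    calc Real.arccos F ^ 2 ≤ ∑ j, p j * θ j ^ 2 := h1
      _ = τ ^ 2 * ∑ j, ‖a j‖ ^ 2 * (E j - Er) ^ 2 := by
        rw [Finset.mul_sum]
        exact Finset.sum_congr rfl fun j _ => by simp [hθdef, hpdef]; ring
  refine ⟨key, ?_⟩
  set μ : ℝ := ∑ j, ‖a j‖ ^ 2 * E j with hμdef
  have h1 := key μ
  have hvar : ∑ j, ‖a j‖ ^ 2 * (E j - μ) ^ 2 = ∑ j, ‖a j‖ ^ 2 * E j ^ 2 - μ ^ 2 := by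
    have hr : ∀ j, ‖a j‖ ^ 2 * (E j - μ) ^ 2
        = ‖a j‖ ^ 2 * E j ^ 2 - (2 * μ) * (‖a j‖ ^ 2 * E j) + μ ^ 2 * ‖a j‖ ^ 2 := fun j => by
      ring
    rw [Finset.sum_congr rfl fun j _ => hr j, Finset.sum_add_distrib, Finset.sum_sub_distrib,
      ← Finset.mul_sum, ← Finset.mul_sum, ha, ← hμdef]
    ring
  have hvar0 : 0 ≤ ∑ j, ‖a j‖ ^ 2 * (E j - μ) ^ 2 :=
    Finset.sum_nonneg fun j _ => mul_nonneg (sq_nonneg _) (sq_nonneg _)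
  rw [← hvar]
  calc Real.arccos F = Real.sqrt (Real.arccos F ^ 2) :=
        (Real.sqrt_sq (Real.arccos_nonneg F)).symm
    _ ≤ Real.sqrt (τ ^ 2 * ∑ j, ‖a j‖ ^ 2 * (E j - μ) ^ 2) := Real.sqrt_le_sqrt h1
    _ = τ * Real.sqrt (∑ j, ‖a j‖ ^ 2 * (E j - μ) ^ 2) := by
        rw [Real.sqrt_mul (sq_nonneg τ), Real.sqrt_sq hτ]
end

section
/- Let n ∈ ℕ, let a : Fin n → ℂ satisfy ∑_j ‖a_j‖² = 1, let E : Fin n → ℝ, let τ ≥ 0, and set √ε = ‖∑_j ‖a_j‖²·exp(−i·E_j·τ)‖. Suppose (p, q, θ) lies in (0,1]×(0,1]×[−π/2,π/2] ∪ (0,1]×(1,2]×[0,π/2] ∪ (1,2]×(0,1]×[−π/2,0] ∪ (1,2]×(1,2]×{0}. Then for every E_r ∈ ℝ: √ε ≥ cos θ − (A_{p,θ}·∑_{j : E_j ≥ E_r} ‖a_j‖²·(E_j − E_r)^p·τ^p + A_{q,−θ}·∑_{j : E_j < E_r} ‖a_j‖²·(E_r − E_j)^q·τ^q). -/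
/-- The set of values `(cos θ - cos x)/(x - θ)^p` for `x ∈ (θ, π)`. -/
noncomputable def Aset (p θ : ℝ) : Set ℝ :=
  (fun x : ℝ => (Real.cos θ - Real.cos x) / (x - θ) ^ p) '' Set.Ioo θ Real.pi

/-- `A p θ` is the supremum of `(cos θ - cos x)/(x - θ)^p` over `x ∈ (θ, π)`. -/
noncomputable def A (p θ : ℝ) : ℝ := sSup (Aset p θ)

section Helpers
open Real Topology Filter

lemma sin_lip (x θ : ℝ) : Real.sin x - Real.sin θ ≤ |x - θ| := by
  rw [Real.sin_sub_sin]
  calc 2 * sin ((x - θ)/2) * cos ((x + θ)/2)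
      ≤ |2 * sin ((x - θ)/2) * cos ((x + θ)/2)| := le_abs_self _
    _ = 2 * |sin ((x - θ)/2)| * |cos ((x + θ)/2)| := by
        rw [abs_mul, abs_mul]; simp
    _ ≤ 2 * (|x - θ|/2) * 1 := by
        gcongr
        · simpa [abs_div] using Real.abs_sin_le_abs (x := (x - θ)/2)
        · exact Real.abs_cos_le_one _
    _ = |x - θ| := by ring

lemma cos_lip (x θ : ℝ) : Real.cos θ - Real.cos x ≤ |x - θ| := by
  rw [Real.cos_sub_cos]
  calc -2 * sin ((θ + x)/2) * sin ((θ - x)/2)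
      ≤ |(-2) * sin ((θ + x)/2) * sin ((θ - x)/2)| := le_abs_self _
    _ = 2 * |sin ((θ + x)/2)| * |sin ((θ - x)/2)| := by
        rw [abs_mul, abs_mul]; simp
    _ ≤ 2 * 1 * (|x - θ|/2) := by
        gcongr
        · exact Real.abs_sin_le_one _
        · have := Real.abs_sin_le_abs (x := (θ - x)/2)
          rw [abs_div] at this
          simpa [abs_sub_comm θ x] using this
    _ = |x - θ| := by ring

lemma aux_quad {θ y : ℝ} (hs : Real.sin θ ≤ 0) (h : θ ≤ y) :
    Real.cos θ - Real.cos y ≤ (y - θ) ^ 2 / 2 := by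
  set f : ℝ → ℝ := fun x => Real.cos x + (x - θ) ^ 2 / 2 with hf
  have hderiv : ∀ x, HasDerivAt f (-Real.sin x + (x - θ)) x := by
    intro x
    have h1 : HasDerivAt (fun x : ℝ => (x - θ) ^ 2 / 2) ((2 * (x - θ) ^ 1 * 1) / 2) x :=
      (((hasDerivAt_id x).sub_const θ).pow 2).div_const 2
    have := (Real.hasDerivAt_cos x).add h1
    exact this.congr_deriv (by ring)
  have mono : MonotoneOn f (Set.Ici θ) := by
    apply monotoneOn_of_deriv_nonneg (convex_Ici θ)
    · exact (Continuous.continuousOn (by continuity))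
    · intro x hx
      exact (hderiv x).differentiableAt.differentiableWithinAt
    · intro x hx
      rw [(hderiv x).deriv]
      have hx' : θ < x := by simpa using hx
      have : Real.sin x ≤ x - θ := by
        have := sin_lip x θ
        have habs : |x - θ| = x - θ := abs_of_nonneg (by linarith)
        nlinarith
      linarith
  have := mono (Set.self_mem_Ici) (by exact h) h
  simp only [hf] at this
  nlinarith [this]

lemma rpow_small {t e : ℝ} (ht : 0 < t) (ht2 : t ≤ 2 * π) (he : 0 ≤ e) (he1 : e ≤ 1) :
    t ^ e ≤ 1 + 2 * π := by
  rcases le_total t 1 with h | h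
  · have := Real.rpow_le_one ht.le h he
    nlinarith [Real.pi_pos]
  · have : t ^ e ≤ t ^ (1 : ℝ) := Real.rpow_le_rpow_of_exponent_le h he1
    rw [Real.rpow_one] at this
    linarith

lemma bdd_Aset {p θ : ℝ} (hp : 0 < p) (hθ : -π ≤ θ)
    (h : p ≤ 1 ∨ (1 ≤ p ∧ p ≤ 2 ∧ Real.sin θ ≤ 0)) : BddAbove (Aset p θ) := by
  refine ⟨1 + 2 * π, ?_⟩
  rintro v ⟨y, ⟨hy1, hy2⟩, rfl⟩
  simp only
  set t := y - θ with htdef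
  have ht : 0 < t := by simp [htdef]; linarith
  have ht2 : t ≤ 2 * π := by have := Real.pi_pos; simp [htdef]; linarith
  have htp : (0:ℝ) < t ^ p := Real.rpow_pos_of_pos ht p
  rcases h with h1 | ⟨h1, h2, hs⟩
  · have hnum : Real.cos θ - Real.cos y ≤ t := by
      have := cos_lip y θ
      rw [← htdef, abs_of_nonneg ht.le] at this; linarith
    have : (Real.cos θ - Real.cos y) / t ^ p ≤ t / t ^ p := by gcongr
    refine this.trans ?_
    have : t / t ^ p = t ^ (1 - p) := by
      rw [Real.rpow_sub ht, Real.rpow_one]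
    rw [this]
    exact rpow_small ht ht2 (by linarith) (by linarith)
  · have hnum : Real.cos θ - Real.cos y ≤ t ^ (2:ℝ) := by
      have := aux_quad hs hy1.le
      rw [Real.rpow_two]
      nlinarith [sq_nonneg t]
    have : (Real.cos θ - Real.cos y) / t ^ p ≤ t ^ (2:ℝ) / t ^ p := by gcongr
    refine this.trans ?_
    have heq : t ^ (2:ℝ) / t ^ p = t ^ (2 - p) := by
      rw [Real.rpow_sub ht]
    rw [heq]
    exact rpow_small ht ht2 (by linarith) (by linarith)

lemma limit_le_A {p θ : ℝ} (hθ : θ < π) (hb : BddAbove (Aset p θ)) :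
    (Real.cos θ + 1) / (π - θ) ^ p ≤ A p θ := by
  have hne : (𝓝[Set.Ioo θ π] π).NeBot := by
    rw [← mem_closure_iff_nhdsWithin_neBot, closure_Ioo hθ.ne]
    exact ⟨hθ.le, le_rfl⟩
  set f : ℝ → ℝ := fun y => (Real.cos θ - Real.cos y) / (y - θ) ^ p with hf
  have hπθ : (0:ℝ) < π - θ := by linarith
  have hden : (0:ℝ) < (π - θ) ^ p := Real.rpow_pos_of_pos hπθ p
  have hcont : ContinuousAt f π := by
    apply ContinuousAt.div
    · exact (continuous_const.sub Real.continuous_cos).continuousAt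
    · exact (continuousAt_id.sub continuousAt_const).rpow_const (Or.inl hπθ.ne')
    · exact hden.ne'
  have htend : Filter.Tendsto f (𝓝[Set.Ioo θ π] π) (𝓝 ((Real.cos θ + 1) / (π - θ) ^ p)) := by
    have : f π = (Real.cos θ + 1) / (π - θ) ^ p := by simp [hf, Real.cos_pi]
    rw [← this]
    exact hcont.continuousWithinAt.tendsto
  refine le_of_tendsto htend ?_
  filter_upwards [self_mem_nhdsWithin] with y hy
  exact le_csSup hb ⟨y, hy, rfl⟩

lemma key_ineq {p θ : ℝ} (hp : 0 < p) (hθ : θ < π) (hb : BddAbove (Aset p θ))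
    {x : ℝ} (hx : 0 ≤ x) :
    Real.cos θ - Real.cos (x + θ) ≤ A p θ * x ^ p := by
  rcases hx.eq_or_lt with h0 | h0
  · simp [← h0, Real.zero_rpow hp.ne']
  rcases lt_or_ge x (π - θ) with hlt | hge
  · have hmem : (Real.cos θ - Real.cos (x + θ)) / x ^ p ∈ Aset p θ := by
      refine ⟨x + θ, ⟨by linarith, by linarith⟩, ?_⟩
      simp
    have hle : (Real.cos θ - Real.cos (x + θ)) / x ^ p ≤ A p θ := le_csSup hb hmem
    have hxp : (0:ℝ) < x ^ p := Real.rpow_pos_of_pos h0 p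
    calc Real.cos θ - Real.cos (x + θ)
        = (Real.cos θ - Real.cos (x + θ)) / x ^ p * x ^ p := by field_simp
      _ ≤ A p θ * x ^ p := by gcongr
  · have hL := limit_le_A hθ hb
    have hπθ : (0:ℝ) < π - θ := by linarith
    have hden : (0:ℝ) < (π - θ) ^ p := Real.rpow_pos_of_pos hπθ p
    have hA0 : 0 ≤ A p θ := le_trans (div_nonneg (by nlinarith [Real.neg_one_le_cos θ]) hden.le) hL
    have h1 : (Real.cos θ + 1) ≤ A p θ * (π - θ) ^ p := by
      rw [div_le_iff₀ hden] at hL; linarith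
    have h2 : A p θ * (π - θ) ^ p ≤ A p θ * x ^ p :=
      mul_le_mul_of_nonneg_left (Real.rpow_le_rpow hπθ.le hge hp.le) hA0
    have h3 : Real.cos θ - Real.cos (x + θ) ≤ Real.cos θ + 1 := by
      nlinarith [Real.neg_one_le_cos (x + θ)]
    linarith

end Helpers

open Real Topology Filter

theorem stmt16 (n : ℕ) (a : Fin n → ℂ) (ha : ∑ j, ‖a j‖ ^ 2 = 1)
    (E : Fin n → ℝ) (τ : ℝ) (hτ : 0 ≤ τ) (p q θ : ℝ)
    (hpqθ :
      (p ∈ Set.Ioc (0 : ℝ) 1 ∧ q ∈ Set.Ioc (0 : ℝ) 1 ∧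
        θ ∈ Set.Icc (-(Real.pi / 2)) (Real.pi / 2)) ∨
      (p ∈ Set.Ioc (0 : ℝ) 1 ∧ q ∈ Set.Ioc (1 : ℝ) 2 ∧
        θ ∈ Set.Icc (0 : ℝ) (Real.pi / 2)) ∨
      (p ∈ Set.Ioc (1 : ℝ) 2 ∧ q ∈ Set.Ioc (0 : ℝ) 1 ∧
        θ ∈ Set.Icc (-(Real.pi / 2)) (0 : ℝ)) ∨
      (p ∈ Set.Ioc (1 : ℝ) 2 ∧ q ∈ Set.Ioc (1 : ℝ) 2 ∧ θ = 0)) :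
    ∀ Er : ℝ,
      Real.cos θ -
        (A p θ * (∑ j ∈ Finset.univ.filter (fun j => Er ≤ E j),
            ‖a j‖ ^ 2 * (E j - Er) ^ p) * τ ^ p +
          A q (-θ) * (∑ j ∈ Finset.univ.filter (fun j => E j < Er),
            ‖a j‖ ^ 2 * (Er - E j) ^ q) * τ ^ q) ≤
      ‖∑ j, ((‖a j‖ ^ 2 : ℝ) : ℂ) * Complex.exp (-Complex.I * (E j : ℂ) * (τ : ℂ))‖ := by
  have hpi := Real.pi_pos
  -- extract parameter facts
  have hp : 0 < p := by rcases hpqθ with ⟨h,_⟩|⟨h,_⟩|⟨h,_⟩|⟨h,_⟩ <;> linarith [h.1]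
  have hq : 0 < q := by rcases hpqθ with ⟨_,h,_⟩|⟨_,h,_⟩|⟨_,h,_⟩|⟨_,h,_⟩ <;> linarith [h.1]
  have hθl : -(π/2) ≤ θ := by
    rcases hpqθ with ⟨_,_,h⟩|⟨_,_,h⟩|⟨_,_,h⟩|⟨_,_,h⟩
    · exact h.1
    · linarith [h.1]
    · exact h.1
    · rw [h]; linarith
  have hθu : θ ≤ π/2 := by
    rcases hpqθ with ⟨_,_,h⟩|⟨_,_,h⟩|⟨_,_,h⟩|⟨_,_,h⟩
    · exact h.2
    · exact h.2
    · linarith [h.2]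
    · rw [h]; linarith
  have hPd : p ≤ 1 ∨ (1 ≤ p ∧ p ≤ 2 ∧ Real.sin θ ≤ 0) := by
    rcases hpqθ with ⟨h,_,_⟩|⟨h,_,_⟩|⟨h,h',hθ'⟩|⟨h,h',hθ'⟩
    · exact Or.inl h.2
    · exact Or.inl h.2
    · refine Or.inr ⟨h.1.le, h.2, ?_⟩
      have : Real.sin (-θ) ≥ 0 :=
        Real.sin_nonneg_of_nonneg_of_le_pi (by linarith [hθ'.2]) (by linarith [hθ'.1])
      rw [Real.sin_neg] at this; linarith
    · exact Or.inr ⟨h.1.le, h.2, by rw [hθ']; simp⟩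
  have hQd : q ≤ 1 ∨ (1 ≤ q ∧ q ≤ 2 ∧ Real.sin (-θ) ≤ 0) := by
    rcases hpqθ with ⟨_,h,_⟩|⟨_,h,hθ'⟩|⟨_,h,_⟩|⟨_,h,hθ'⟩
    · exact Or.inl h.2
    · refine Or.inr ⟨h.1.le, h.2, ?_⟩
      rw [Real.sin_neg]
      have : Real.sin θ ≥ 0 :=
        Real.sin_nonneg_of_nonneg_of_le_pi hθ'.1 (by linarith [hθ'.2])
      linarith
    · exact Or.inl h.2
    · exact Or.inr ⟨h.1.le, h.2, by rw [hθ']; simp⟩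
  have hbp : BddAbove (Aset p θ) := bdd_Aset hp (by linarith) hPd
  have hbq : BddAbove (Aset q (-θ)) := bdd_Aset hq (by linarith) hQd
  have hθπ : θ < π := by linarith
  have hθπ' : -θ < π := by linarith
  intro Er
  set w : Fin n → ℝ := fun j => ‖a j‖ ^ 2 with hwdef
  have hw : ∀ j, 0 ≤ w j := fun j => by positivity
  set S : ℂ := ∑ j, ((w j : ℝ) : ℂ) * Complex.exp (-Complex.I * (E j : ℂ) * (τ : ℂ)) with hS
  set c : ℂ := Complex.exp (((Er * τ - θ : ℝ) : ℂ) * Complex.I) with hc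
  have hnormc : ‖c‖ = 1 := by
    rw [hc]; exact Complex.norm_exp_ofReal_mul_I _
  have hnorm : ‖c * S‖ = ‖S‖ := by rw [norm_mul, hnormc, one_mul]
  have re_eq : (c * S).re = ∑ j, w j * Real.cos ((E j - Er) * τ + θ) := by
    rw [hS, Finset.mul_sum, Complex.re_sum]
    refine Finset.sum_congr rfl fun j _ => ?_
    have hterm : c * (((w j : ℝ) : ℂ) * Complex.exp (-Complex.I * (E j : ℂ) * (τ : ℂ)))
        = ((w j : ℝ) : ℂ) * Complex.exp (((Er * τ - θ - E j * τ : ℝ) : ℂ) * Complex.I) := by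
      rw [hc, mul_comm c, mul_assoc, ← Complex.exp_add]
      congr 1
      push_cast
      ring
    rw [hterm, Complex.re_ofReal_mul, Complex.exp_ofReal_mul_I_re]
    congr 1
    rw [show (E j - Er) * τ + θ = -(Er * τ - θ - E j * τ) by ring, Real.cos_neg]
  have re_le : (c * S).re ≤ ‖S‖ := by
    rw [← hnorm]
    exact Complex.re_le_norm _
  -- pointwise bounds
  set P : Fin n → Prop := fun j => Er ≤ E j with hPdef
  have hsum_w : (∑ j ∈ Finset.univ.filter P, w j) +
      ∑ j ∈ Finset.univ.filter (fun j => ¬ P j), w j = 1 := by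
    rw [Finset.sum_filter_add_sum_filter_not]; exact ha
  have hfilter_eq : Finset.univ.filter (fun j => ¬ P j)
      = Finset.univ.filter (fun j => E j < Er) := by
    apply Finset.filter_congr; intro j _; simp [hPdef, not_le]
  have boundP : ∀ j ∈ Finset.univ.filter P,
      w j * Real.cos θ - A p θ * (w j * (E j - Er) ^ p) * τ ^ p
        ≤ w j * Real.cos ((E j - Er) * τ + θ) := by
    intro j hj
    have hje : Er ≤ E j := by simpa [hPdef] using (Finset.mem_filter.mp hj).2
    have hx : 0 ≤ (E j - Er) * τ := mul_nonneg (by linarith) hτ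
    have hk := key_ineq hp hθπ hbp hx
    rw [Real.mul_rpow (by linarith : (0:ℝ) ≤ E j - Er) hτ] at hk
    nlinarith [hw j, mul_le_mul_of_nonneg_left hk (hw j)]
  have boundQ : ∀ j ∈ Finset.univ.filter (fun j => ¬ P j),
      w j * Real.cos θ - A q (-θ) * (w j * (Er - E j) ^ q) * τ ^ q
        ≤ w j * Real.cos ((E j - Er) * τ + θ) := by
    intro j hj
    have hje : E j < Er := by
      have := (Finset.mem_filter.mp hj).2; simpa [hPdef, not_le] using this
    have hx : 0 ≤ (Er - E j) * τ := mul_nonneg (by linarith) hτ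
    have hk := key_ineq hq hθπ' hbq hx
    rw [Real.mul_rpow (by linarith : (0:ℝ) ≤ Er - E j) hτ] at hk
    rw [Real.cos_neg] at hk
    have hcos : Real.cos ((Er - E j) * τ + -θ) = Real.cos ((E j - Er) * τ + θ) := by
      rw [show (Er - E j) * τ + -θ = -((E j - Er) * τ + θ) by ring, Real.cos_neg]
    rw [hcos] at hk
    nlinarith [hw j, mul_le_mul_of_nonneg_left hk (hw j)]
  have sumP := Finset.sum_le_sum boundP
  have sumQ := Finset.sum_le_sum boundQ
  have eP : ∑ j ∈ Finset.univ.filter P,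
      (w j * Real.cos θ - A p θ * (w j * (E j - Er) ^ p) * τ ^ p)
      = (∑ j ∈ Finset.univ.filter P, w j) * Real.cos θ
        - A p θ * (∑ j ∈ Finset.univ.filter P, w j * (E j - Er) ^ p) * τ ^ p := by
    rw [Finset.sum_sub_distrib, Finset.sum_mul, Finset.mul_sum, Finset.sum_mul]
  have eQ : ∑ j ∈ Finset.univ.filter (fun j => ¬ P j),
      (w j * Real.cos θ - A q (-θ) * (w j * (Er - E j) ^ q) * τ ^ q)
      = (∑ j ∈ Finset.univ.filter (fun j => ¬ P j), w j) * Real.cos θ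
        - A q (-θ) * (∑ j ∈ Finset.univ.filter (fun j => ¬ P j), w j * (Er - E j) ^ q) * τ ^ q := by
    rw [Finset.sum_sub_distrib, Finset.sum_mul, Finset.mul_sum, Finset.sum_mul]
  rw [eP] at sumP
  rw [eQ] at sumQ
  have hsplit : (∑ j ∈ Finset.univ.filter P, w j * Real.cos ((E j - Er) * τ + θ))
      + ∑ j ∈ Finset.univ.filter (fun j => ¬ P j), w j * Real.cos ((E j - Er) * τ + θ)
      = ∑ j, w j * Real.cos ((E j - Er) * τ + θ) :=
    Finset.sum_filter_add_sum_filter_not _ _ _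
  have final : Real.cos θ
      - (A p θ * (∑ j ∈ Finset.univ.filter P, w j * (E j - Er) ^ p) * τ ^ p
        + A q (-θ) * (∑ j ∈ Finset.univ.filter (fun j => ¬ P j), w j * (Er - E j) ^ q) * τ ^ q)
      ≤ ∑ j, w j * Real.cos ((E j - Er) * τ + θ) := by
    rw [← hsplit]
    have h1 : (∑ j ∈ Finset.univ.filter P, w j) * Real.cos θ
        + (∑ j ∈ Finset.univ.filter (fun j => ¬ P j), w j) * Real.cos θ = Real.cos θ := by
      rw [← add_mul, hsum_w, one_mul]
    linarith [sumP, sumQ]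
  rw [hfilter_eq] at final
  calc Real.cos θ -
        (A p θ * (∑ j ∈ Finset.univ.filter (fun j => Er ≤ E j),
            ‖a j‖ ^ 2 * (E j - Er) ^ p) * τ ^ p +
          A q (-θ) * (∑ j ∈ Finset.univ.filter (fun j => E j < Er),
            ‖a j‖ ^ 2 * (Er - E j) ^ q) * τ ^ q)
      ≤ ∑ j, w j * Real.cos ((E j - Er) * τ + θ) := final
    _ = (c * S).re := re_eq.symm
    _ ≤ ‖S‖ := re_le
end

section
/- Let p ∈ (0,1] and θ ∈ [−π/2, π/2], and set φ = φ_p(θ). Then sin²φ − p + p·cos θ·cos φ ≤ 0, with equality if and only if p = 1 and θ = π/2. -/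
open Real Set

private lemma aux_cos_add_le (θ : ℝ) (h : θ ≤ Real.pi / 2) :
    Real.cos θ + θ ≤ Real.pi / 2 := by
  have h1 : Real.sin (Real.pi / 2 - θ) = Real.cos θ := Real.sin_pi_div_two_sub θ
  have h2 : Real.sin (Real.pi / 2 - θ) ≤ Real.pi / 2 - θ := Real.sin_le (by linarith)
  linarith

private lemma aux_mono1 (a : ℝ) (ha : 0 ≤ a) :
    StrictMonoOn (fun x => Real.cos x - Real.cos a + (x - a) * Real.sin x)
      (Set.Icc a (Real.pi / 2)) := by
  apply strictMonoOn_of_deriv_pos (convex_Icc _ _)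
  · fun_prop
  · intro x hx
    rw [interior_Icc] at hx
    have hd : HasDerivAt (fun x => Real.cos x - Real.cos a + (x - a) * Real.sin x)
        ((x - a) * Real.cos x) x := by
      have h1 : HasDerivAt (fun x : ℝ => Real.cos x - Real.cos a) (-Real.sin x) x :=
        (Real.hasDerivAt_cos x).sub_const _
      have h2 : HasDerivAt (fun x : ℝ => (x - a) * Real.sin x)
          (1 * Real.sin x + (x - a) * Real.cos x) x :=
        ((hasDerivAt_id x).sub_const a).mul (Real.hasDerivAt_sin x)
      have := h1.add h2
      refine this.congr_deriv ?_
      ring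
    rw [hd.deriv]
    have hc : 0 < Real.cos x :=
      Real.cos_pos_of_mem_Ioo ⟨by nlinarith [Real.pi_pos, hx.1], hx.2⟩
    nlinarith [hx.1]

private lemma aux_mono2 (θ : ℝ) (hq : 0 ≤ Real.cos θ) (hθ : θ ≤ Real.pi / 2) :
    StrictMonoOn (fun x => (x - θ) * (1 - Real.cos θ * Real.cos x)
      - Real.sin x * (Real.cos θ - Real.cos x)) (Set.Icc (Real.pi / 2) Real.pi) := by
  apply strictMonoOn_of_deriv_pos (convex_Icc _ _)
  · fun_prop
  · intro x hx
    rw [interior_Icc] at hx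
    have hd : HasDerivAt (fun x => (x - θ) * (1 - Real.cos θ * Real.cos x)
        - Real.sin x * (Real.cos θ - Real.cos x))
        (2 * Real.cos x * (Real.cos x - Real.cos θ) + (x - θ) * (Real.cos θ * Real.sin x)) x := by
      have h1 : HasDerivAt (fun x : ℝ => (x - θ) * (1 - Real.cos θ * Real.cos x))
          (1 * (1 - Real.cos θ * Real.cos x) + (x - θ) * (0 - Real.cos θ * (-Real.sin x))) x :=
        ((hasDerivAt_id x).sub_const θ).mul
          ((hasDerivAt_const x (1:ℝ)).sub (((Real.hasDerivAt_cos x).const_mul (Real.cos θ))))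
      have h2 : HasDerivAt (fun x : ℝ => Real.sin x * (Real.cos θ - Real.cos x))
          (Real.cos x * (Real.cos θ - Real.cos x) + Real.sin x * (0 - -Real.sin x)) x :=
        (Real.hasDerivAt_sin x).mul
          ((hasDerivAt_const x (Real.cos θ)).sub (Real.hasDerivAt_cos x))
      have := h1.sub h2
      refine this.congr_deriv ?_
      nlinarith [Real.sin_sq_add_cos_sq x]
    rw [hd.deriv]
    have hc : Real.cos x < 0 := Real.cos_neg_of_pi_div_two_lt_of_lt hx.1 (by linarith [hx.2, Real.pi_pos])
    have hs : 0 < Real.sin x :=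
      Real.sin_pos_of_pos_of_lt_pi (by linarith [Real.pi_pos, hx.1]) hx.2
    have hxθ : 0 < x - θ := by linarith [hx.1]
    nlinarith [mul_nonneg hq hs.le]

private lemma aux_anti (hmem : Real.pi / 2 ∈ Set.Icc (Real.pi / 2) Real.pi) :
    StrictAntiOn (fun x => Real.cos x + (x - Real.pi / 2) * Real.sin x)
      (Set.Icc (Real.pi / 2) Real.pi) := by
  apply strictAntiOn_of_deriv_neg (convex_Icc _ _)
  · fun_prop
  · intro x hx
    rw [interior_Icc] at hx
    have hd : HasDerivAt (fun x => Real.cos x + (x - Real.pi / 2) * Real.sin x)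
        ((x - Real.pi / 2) * Real.cos x) x := by
      have h1 : HasDerivAt (fun x : ℝ => Real.cos x) (-Real.sin x) x := Real.hasDerivAt_cos x
      have h2 : HasDerivAt (fun x : ℝ => (x - Real.pi / 2) * Real.sin x)
          (1 * Real.sin x + (x - Real.pi / 2) * Real.cos x) x :=
        ((hasDerivAt_id x).sub_const _).mul (Real.hasDerivAt_sin x)
      have := h1.add h2
      refine this.congr_deriv ?_
      ring
    rw [hd.deriv]
    have hc : Real.cos x < 0 := Real.cos_neg_of_pi_div_two_lt_of_lt hx.1 (by linarith [hx.2, Real.pi_pos])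
    nlinarith [hx.1]

theorem stmt17 (p θ φ : ℝ) (hp : p ∈ Set.Ioc (0 : ℝ) 1)
    (hθ : θ ∈ Set.Icc (-(Real.pi / 2)) (Real.pi / 2))
    (hφ : φ ∈ Set.Ioo |θ| Real.pi ∧
      p * (Real.cos φ - Real.cos θ) + (φ - θ) * Real.sin φ = 0) :
    Real.sin φ ^ 2 - p + p * Real.cos θ * Real.cos φ ≤ 0 ∧
    (Real.sin φ ^ 2 - p + p * Real.cos θ * Real.cos φ = 0 ↔ p = 1 ∧ θ = Real.pi / 2) := by
  obtain ⟨⟨h1, h2⟩, heq⟩ := hφ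
  obtain ⟨hp0, hp1⟩ := hp
  obtain ⟨hθ1, hθ2⟩ := hθ
  have hπ := Real.pi_pos
  have ha0 : (0:ℝ) ≤ |θ| := abs_nonneg θ
  have haθ : θ ≤ |θ| := le_abs_self θ
  have ha2 : |θ| ≤ Real.pi / 2 := abs_le.mpr ⟨by linarith, hθ2⟩
  have hφ0 : 0 < φ := lt_of_le_of_lt ha0 h1
  have hs : 0 < Real.sin φ := Real.sin_pos_of_pos_of_lt_pi hφ0 h2
  have hq : 0 ≤ Real.cos θ := Real.cos_nonneg_of_mem_Icc ⟨by linarith, hθ2⟩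
  have hcc : Real.cos φ < Real.cos θ := by
    rw [← Real.cos_abs θ]
    exact Real.cos_lt_cos_of_nonneg_of_le_pi ha0 h2.le h1
  -- Step 1 : φ > π/2
  have hphi : Real.pi / 2 < φ := by
    by_contra hcon
    push_neg at hcon
    have hmono := aux_mono1 |θ| ha0
    have hF := hmono (Set.left_mem_Icc.mpr (by linarith)) ⟨h1.le, hcon⟩ h1
    simp only [sub_self, zero_mul, zero_add, Real.cos_abs] at hF
    nlinarith [mul_nonneg (sub_nonneg.mpr haθ) hs.le,
      mul_nonneg (sub_nonneg.mpr hp1) (sub_nonneg.mpr hcc.le)]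
  -- Step 2 : N > 0
  have hN0 : 0 < (φ - θ) * (1 - Real.cos θ * Real.cos φ)
      - Real.sin φ * (Real.cos θ - Real.cos φ) := by
    have h := aux_mono2 θ hq hθ2 (Set.left_mem_Icc.mpr (by linarith)) ⟨hphi.le, h2.le⟩ hphi
    simp only [Real.cos_pi_div_two, Real.sin_pi_div_two, mul_zero, sub_zero, one_mul,
      mul_one] at h
    have hc2 := aux_cos_add_le θ hθ2
    linarith
  -- Step 3 : E < 0
  have hts : (φ - θ) * Real.sin φ = p * (Real.cos θ - Real.cos φ) := by
    linear_combination heq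
  have hE : Real.sin φ ^ 2 - p + p * Real.cos θ * Real.cos φ < 0 := by
    have key : (Real.sin φ ^ 2 - p + p * Real.cos θ * Real.cos φ) * (Real.cos θ - Real.cos φ)
        = -(Real.sin φ * ((φ - θ) * (1 - Real.cos θ * Real.cos φ)
          - Real.sin φ * (Real.cos θ - Real.cos φ))) := by
      have hsq : Real.sin φ ^ 2 = 1 - Real.cos φ ^ 2 := by
        nlinarith [Real.sin_sq_add_cos_sq φ]
      linear_combination (1 - Real.cos θ * Real.cos φ) * hts
    nlinarith [mul_pos hs hN0, sub_pos.mpr hcc]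
  refine ⟨hE.le, fun h => absurd h hE.ne, ?_⟩
  rintro ⟨hp', hθ'⟩
  exfalso
  subst hp' hθ'
  have hanti := aux_anti (Set.left_mem_Icc.mpr (by linarith))
    (Set.left_mem_Icc.mpr (by linarith)) ⟨hphi.le, h2.le⟩ hphi
  simp only [Real.cos_pi_div_two, sub_self, zero_mul, add_zero, zero_add] at hanti
  simp only [Real.cos_pi_div_two, one_mul, sub_zero] at heq
  linarith
end

section
/- Let a₀, a₁ ∈ ℂ be nonzero with ‖a₀‖² + ‖a₁‖² = 1, let E₀ < E₁ be real, let τ ≥ 0, and set √ε = ‖‖a₀‖²·exp(−i·E₀·τ) + ‖a₁‖²·exp(−i·E₁·τ)‖. Then for every p ∈ (1,2]: τ^p ≥ (1 − √ε)·(‖a₀‖^{−2/(p−1)} + ‖a₁‖^{−2/(p−1)})^{p−1} / ((E₁ − E₀)^p·A_{p,0}). -/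
open Real

lemma mem_Aset0 {p x : ℝ} (hx : x ∈ Set.Ioo 0 Real.pi) :
    (1 - Real.cos x) / x ^ p ∈ Aset p 0 := by
  refine ⟨x, hx, ?_⟩
  simp

lemma Aset_bddAbove {p : ℝ} (hp : p ∈ Set.Ioc (1:ℝ) 2) : BddAbove (Aset p 0) := by
  refine ⟨Real.pi ^ (2 - p) / 2, ?_⟩
  rintro _ ⟨x, hx, rfl⟩
  obtain ⟨hx0, hxπ⟩ := hx
  simp only [Real.cos_zero, sub_zero]
  have hxp : (0:ℝ) < x ^ p := Real.rpow_pos_of_pos hx0 p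
  have h1 : 1 - Real.cos x ≤ x ^ (2:ℝ) / 2 := by
    have h := Real.one_sub_sq_div_two_le_cos (x := x)
    have h2 : x ^ (2:ℝ) = x ^ (2:ℕ) := by
      rw [← Real.rpow_natCast x 2]; norm_num
    rw [h2]; linarith
  calc (1 - Real.cos x) / x ^ p ≤ (x ^ (2:ℝ) / 2) / x ^ p := by gcongr
    _ = x ^ (2 - p) / 2 := by
        rw [Real.rpow_sub hx0]; ring
    _ ≤ Real.pi ^ (2 - p) / 2 := by
        have : x ^ (2-p) ≤ Real.pi ^ (2-p) :=
          Real.rpow_le_rpow hx0.le hxπ.le (by linarith [hp.2])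
        linarith

lemma A_pos {p : ℝ} (hp : p ∈ Set.Ioc (1:ℝ) 2) : 0 < A p 0 := by
  have hmem := mem_Aset0 (p := p) (x := Real.pi/2)
    ⟨by positivity, by linarith [Real.pi_pos]⟩
  have hle : _ ≤ A p 0 := le_csSup (Aset_bddAbove hp) hmem
  have hpos : 0 < (1 - Real.cos (Real.pi/2)) / (Real.pi/2) ^ p := by
    rw [Real.cos_pi_div_two]
    have := Real.rpow_pos_of_pos (show (0:ℝ) < Real.pi/2 by positivity) p
    positivity
  exact lt_of_lt_of_le hpos hle

lemma A_mul_pi_rpow {p : ℝ} (hp : p ∈ Set.Ioc (1:ℝ) 2) : 2 ≤ A p 0 * Real.pi ^ p := by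
  by_contra h
  push_neg at h
  have hA := A_pos hp
  have hπp : (0:ℝ) < Real.pi ^ p := Real.rpow_pos_of_pos Real.pi_pos p
  set M := A p 0 * Real.pi ^ p with hM
  have hMpos : 0 < M := by positivity
  set t : ℝ := -M / 2 with htdef
  have ht1 : -1 < t := by rw [htdef]; linarith
  have ht2 : t < 1 := by rw [htdef]; linarith
  set x := Real.arccos t with hxdef
  have hx0 : 0 < x := Real.arccos_pos.mpr ht2
  have hxπ : x < Real.pi := by
    refine lt_of_le_of_ne (Real.arccos_le_pi t) ?_
    intro hc
    have := Real.arccos_eq_pi.mp hc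
    linarith
  have hcos : Real.cos x = t := Real.cos_arccos ht1.le ht2.le
  have hle : (1 - Real.cos x) / x ^ p ≤ A p 0 :=
    le_csSup (Aset_bddAbove hp) (mem_Aset0 (p := p) ⟨hx0, hxπ⟩)
  rw [hcos] at hle
  have hxp : (0:ℝ) < x ^ p := Real.rpow_pos_of_pos hx0 p
  have h1 : 1 - t ≤ A p 0 * x ^ p := by
    have := (div_le_iff₀ hxp).mp hle
    linarith
  have h2 : A p 0 * x ^ p ≤ M := by
    rw [hM]
    have : x ^ p ≤ Real.pi ^ p := Real.rpow_le_rpow hx0.le hxπ.le (by linarith [hp.1])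
    nlinarith
  rw [htdef] at h1
  linarith

lemma one_sub_cos_le {p : ℝ} (hp : p ∈ Set.Ioc (1:ℝ) 2) {t : ℝ} (ht : 0 ≤ t) :
    1 - Real.cos t ≤ A p 0 * t ^ p := by
  rcases eq_or_lt_of_le ht with rfl | ht0
  · simp [Real.zero_rpow (by linarith [hp.1] : p ≠ 0)]
  rcases lt_or_ge t Real.pi with htπ | htπ
  · have hle : (1 - Real.cos t) / t ^ p ≤ A p 0 :=
      le_csSup (Aset_bddAbove hp) (mem_Aset0 (p := p) ⟨ht0, htπ⟩)
    have hxp : (0:ℝ) < t ^ p := Real.rpow_pos_of_pos ht0 p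
    have := (div_le_iff₀ hxp).mp hle
    linarith
  · have h2 : 1 - Real.cos t ≤ 2 := by linarith [Real.neg_one_le_cos t]
    have h3 : Real.pi ^ p ≤ t ^ p :=
      Real.rpow_le_rpow Real.pi_pos.le htπ (by linarith [hp.1])
    have hA := A_pos hp
    nlinarith [A_mul_pi_rpow hp]

set_option maxHeartbeats 1000000 in
theorem stmt19 (a0 a1 : ℂ) (h0 : a0 ≠ 0) (h1 : a1 ≠ 0)
    (hnorm : ‖a0‖ ^ 2 + ‖a1‖ ^ 2 = 1)
    (E0 E1 : ℝ) (hE : E0 < E1) (τ : ℝ) (hτ : 0 ≤ τ)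
    (p : ℝ) (hp : p ∈ Set.Ioc (1 : ℝ) 2) :
    (1 - ‖((‖a0‖ ^ 2 : ℝ) : ℂ) * Complex.exp (-Complex.I * (E0 : ℂ) * (τ : ℂ)) +
          ((‖a1‖ ^ 2 : ℝ) : ℂ) * Complex.exp (-Complex.I * (E1 : ℂ) * (τ : ℂ))‖) *
        (‖a0‖ ^ (-(2 / (p - 1))) + ‖a1‖ ^ (-(2 / (p - 1)))) ^ (p - 1) /
        ((E1 - E0) ^ p * A p 0) ≤ τ ^ p := by
  have hp1 : (1:ℝ) < p := hp.1
  have hps : (0:ℝ) < p - 1 := by linarith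
  set c0 : ℝ := ‖a0‖ ^ 2 with hc0def
  set c1 : ℝ := ‖a1‖ ^ 2 with hc1def
  have hc0 : 0 < c0 := by
    have : 0 < ‖a0‖ := norm_pos_iff.mpr h0
    positivity
  have hc1 : 0 < c1 := by
    have : 0 < ‖a1‖ := norm_pos_iff.mpr h1
    positivity
  set q : ℝ := 1 / (p - 1) with hqdef
  have hq : 0 < q := by positivity
  have hqp : q * (p - 1) = 1 := by rw [hqdef]; field_simp
  set d0 : ℝ := c0 ^ q with hd0def
  set d1 : ℝ := c1 ^ q with hd1def
  have hd0 : 0 < d0 := Real.rpow_pos_of_pos hc0 q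
  have hd1 : 0 < d1 := Real.rpow_pos_of_pos hc1 q
  set T : ℝ := d0 + d1 with hTdef
  have hT : 0 < T := by positivity
  set Δ : ℝ := E1 - E0 with hΔdef
  have hΔ : 0 < Δ := by rw [hΔdef]; linarith
  set x0 : ℝ := Δ * τ * d1 / T with hx0def
  set y0 : ℝ := Δ * τ * d0 / T with hy0def
  have hx0 : 0 ≤ x0 := by positivity
  have hy0 : 0 ≤ y0 := by positivity
  have hsum : x0 + y0 = Δ * τ := by
    rw [hx0def, hy0def, hTdef]; field_simp; ring
  set z : ℂ := ((c0 : ℝ) : ℂ) * Complex.exp (-Complex.I * (E0 : ℂ) * (τ : ℂ)) +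
      ((c1 : ℝ) : ℂ) * Complex.exp (-Complex.I * (E1 : ℂ) * (τ : ℂ)) with hzdef
  -- Step A : lower bound on ‖z‖
  have keyA : c0 * Real.cos x0 + c1 * Real.cos y0 ≤ ‖z‖ := by
    set w : ℂ := Complex.exp (((E0 * τ + x0 : ℝ) : ℂ) * Complex.I) * z with hwdef
    have hnw : ‖w‖ = ‖z‖ := by
      rw [hwdef, norm_mul,
        Complex.norm_exp_ofReal_mul_I, one_mul]
    have hw : w = ((c0 : ℝ) : ℂ) * Complex.exp (((x0 : ℝ) : ℂ) * Complex.I) +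
        ((c1 : ℝ) : ℂ) * Complex.exp (((-y0 : ℝ) : ℂ) * Complex.I) := by
      have hsum' : x0 + y0 = (E1 - E0) * τ := by rw [← hΔdef]; exact hsum
      have hsC : (x0 : ℂ) + (y0 : ℂ) = ((E1 : ℂ) - E0) * (τ : ℂ) := by
        exact_mod_cast hsum'
      have harg1 : ((E0 * τ + x0 : ℝ) : ℂ) * Complex.I + -Complex.I * (E0 : ℂ) * (τ : ℂ)
          = ((x0 : ℝ) : ℂ) * Complex.I := by push_cast; ring
      have harg2 : ((E0 * τ + x0 : ℝ) : ℂ) * Complex.I + -Complex.I * (E1 : ℂ) * (τ : ℂ)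
          = ((-y0 : ℝ) : ℂ) * Complex.I := by
        push_cast
        linear_combination Complex.I * hsC
      have e0 : Complex.exp (((E0 * τ + x0 : ℝ) : ℂ) * Complex.I) *
          (((c0 : ℝ) : ℂ) * Complex.exp (-Complex.I * (E0 : ℂ) * (τ : ℂ)))
          = ((c0 : ℝ) : ℂ) * Complex.exp (((x0 : ℝ) : ℂ) * Complex.I) := by
        rw [mul_left_comm, ← Complex.exp_add, harg1]
      have e1 : Complex.exp (((E0 * τ + x0 : ℝ) : ℂ) * Complex.I) *
          (((c1 : ℝ) : ℂ) * Complex.exp (-Complex.I * (E1 : ℂ) * (τ : ℂ)))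
          = ((c1 : ℝ) : ℂ) * Complex.exp (((-y0 : ℝ) : ℂ) * Complex.I) := by
        rw [mul_left_comm, ← Complex.exp_add, harg2]
      rw [hwdef, hzdef, mul_add, e0, e1]
    have hre : w.re = c0 * Real.cos x0 + c1 * Real.cos y0 := by
      have r1 : (Complex.exp (((x0 : ℝ) : ℂ) * Complex.I)).re = Real.cos x0 :=
        Complex.exp_ofReal_mul_I_re x0
      have r2 : (Complex.exp (((-y0 : ℝ) : ℂ) * Complex.I)).re = Real.cos y0 := by
        rw [Complex.exp_ofReal_mul_I_re]; exact Real.cos_neg y0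
      rw [hw]
      simp only [Complex.add_re, Complex.mul_re, Complex.ofReal_re, Complex.ofReal_im,
        r1, r2]
      ring
    calc c0 * Real.cos x0 + c1 * Real.cos y0 = w.re := hre.symm
      _ ≤ ‖w‖ := by exact Complex.re_le_norm w
      _ = ‖z‖ := hnw
  -- Step B : 1 - ‖z‖ bound
  have hc01 : c0 + c1 = 1 := hnorm
  have hb0 := one_sub_cos_le hp hx0
  have hb1 := one_sub_cos_le hp hy0
  have hmain : 1 - ‖z‖ ≤ A p 0 * (c0 * x0 ^ p + c1 * y0 ^ p) := by
    have h1' : c0 * (1 - Real.cos x0) ≤ c0 * (A p 0 * x0 ^ p) :=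
      mul_le_mul_of_nonneg_left hb0 hc0.le
    have h2' : c1 * (1 - Real.cos y0) ≤ c1 * (A p 0 * y0 ^ p) :=
      mul_le_mul_of_nonneg_left hb1 hc1.le
    nlinarith [keyA]
  -- algebra : compute c0 * x0^p + c1 * y0^p
  have hdp : ∀ c : ℝ, 0 < c → (c ^ q) ^ p = c ^ q * c := by
    intro c hc
    rw [← Real.rpow_mul hc.le, show q * p = q + 1 from by linear_combination hqp,
      Real.rpow_add hc, Real.rpow_one]
  have hx0p : x0 ^ p = (Δ * τ) ^ p * (d1 * c1) / T ^ p := by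
    rw [hx0def, Real.div_rpow (by positivity) hT.le,
      Real.mul_rpow (by positivity) hd1.le, hd1def, hdp c1 hc1]
  have hy0p : y0 ^ p = (Δ * τ) ^ p * (d0 * c0) / T ^ p := by
    rw [hy0def, Real.div_rpow (by positivity) hT.le,
      Real.mul_rpow (by positivity) hd0.le, hd0def, hdp c0 hc0]
  have hsump : c0 * x0 ^ p + c1 * y0 ^ p = (Δ * τ) ^ p * (c0 * c1) * T / T ^ p := by
    rw [hx0p, hy0p, hTdef]; field_simp; ring
  -- rewrite the B-term
  have hBterm : ∀ (a : ℂ) (ha : a ≠ 0), ‖a‖ ^ (-(2 / (p - 1))) = ((‖a‖:ℝ) ^ 2) ^ (-q) := by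
    intro a ha
    rw [show -(2 / (p-1)) = (2:ℝ) * (-q) by rw [hqdef]; ring,
      Real.rpow_mul (norm_nonneg a)]
    congr 1
    rw [← Real.rpow_natCast ‖a‖ 2]
    norm_num
  have hB0 : ‖a0‖ ^ (-(2 / (p - 1))) = d0⁻¹ := by
    rw [hBterm a0 h0, ← hc0def, Real.rpow_neg hc0.le, hd0def]
  have hB1 : ‖a1‖ ^ (-(2 / (p - 1))) = d1⁻¹ := by
    rw [hBterm a1 h1, ← hc1def, Real.rpow_neg hc1.le, hd1def]
  have hd0d1 : d0 * d1 = (c0 * c1) ^ q := by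
    rw [hd0def, hd1def, ← Real.mul_rpow hc0.le hc1.le]
  have hBsum : ‖a0‖ ^ (-(2 / (p - 1))) + ‖a1‖ ^ (-(2 / (p - 1))) = T / (d0 * d1) := by
    rw [hB0, hB1, hTdef]; field_simp; ring
  have hBpow : (‖a0‖ ^ (-(2 / (p - 1))) + ‖a1‖ ^ (-(2 / (p - 1)))) ^ (p - 1)
      = T ^ (p - 1) / (c0 * c1) := by
    rw [hBsum, Real.div_rpow hT.le (by positivity), hd0d1,
      ← Real.rpow_mul (by positivity : (0:ℝ) ≤ c0 * c1), hqp, Real.rpow_one]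
  -- final assembly
  have hA := A_pos hp
  have hΔp : (0:ℝ) < Δ ^ p := Real.rpow_pos_of_pos hΔ p
  have hTp : (0:ℝ) < T ^ p := Real.rpow_pos_of_pos hT p
  have hTps : (0:ℝ) < T ^ (p-1) := Real.rpow_pos_of_pos hT (p-1)
  rw [hBpow, div_le_iff₀ (by positivity : (0:ℝ) < Δ ^ p * A p 0)]
  have step : (1 - ‖z‖) * (T ^ (p-1) / (c0 * c1))
      ≤ (A p 0 * ((Δ * τ) ^ p * (c0 * c1) * T / T ^ p)) * (T ^ (p-1) / (c0 * c1)) := by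
    apply mul_le_mul_of_nonneg_right _ (by positivity)
    rw [← hsump]; exact hmain
  refine le_trans step (le_of_eq ?_)
  have hTT : T ^ (p - 1) * T = T ^ p := by
    rw [← Real.rpow_add_one hT.ne' (p - 1)]
    congr 1
    ring
  rw [Real.mul_rpow hΔ.le hτ]
  clear_value c0 c1 d0 d1 T Δ
  field_simp
  linear_combination τ ^ p * hTT
end
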